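/- arXiv:1909.07093 — 3 statements merged into one kernel-verified Lean document; each statement's English description precedes it below -/
import Mathlib

section
/- Let Γ0 and Γ1 be two order-preserving strictly-upward straight-line planar drawings of a rooted ordered tree T, and let M be any upward planar morph between Γ0 and Γ1 (a sequence of linear morphing steps, each of which is planar and upward). Then every drawing occurring during M — each drawing of the sequence and each intermediate drawing of each linear step — is order-preserving. -/
open Real Set

/-- A finite rooted ordered tree: a root, a parent function (fixing the root),
well-foundedness (every node reaches the root by iterating `parent`), and a
rank function giving the left-to-right order among siblings. -/
structure OTree (V : Type) [Fintype V] [DecidableEq V] where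
  root : V
  parent : V → V
  parent_root : parent root = root
  reach : ∀ v : V, ∃ n : ℕ, parent^[n] v = root
  rank : V → ℕ
  rank_inj : ∀ u v : V, u ≠ root → v ≠ root →
    parent u = parent v → rank u = rank v → u = v

variable {V : Type} [Fintype V] [DecidableEq V]

/-- `c` is a child of `v`. -/
def OTree.IsChild (T : OTree V) (c v : V) : Prop := c ≠ T.root ∧ T.parent c = v

/-- A leaf is a node with no children. -/
def OTree.IsLeaf (T : OTree V) (v : V) : Prop := ∀ c, ¬ T.IsChild c v

/-- `a` is an ancestor of `w`, or `a = w`. -/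
def OTree.AncEq (T : OTree V) (a w : V) : Prop := ∃ n : ℕ, T.parent^[n] w = a

/-- A drawing is strictly upward if every non-root node lies strictly below its parent. -/
def IsUpwardD (T : OTree V) (Γ : V → ℝ × ℝ) : Prop :=
  ∀ v, v ≠ T.root → (Γ v).2 < (Γ (T.parent v)).2

/-- A straight-line drawing is planar if it is injective on nodes and any two distinct
edge segments meet only in (images of) shared endpoints. -/
def IsPlanarD (T : OTree V) (Γ : V → ℝ × ℝ) : Prop :=
  Function.Injective Γ ∧
  ∀ u v : V, u ≠ T.root → v ≠ T.root → u ≠ v →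
    segment ℝ (Γ u) (Γ (T.parent u)) ∩ segment ℝ (Γ v) (Γ (T.parent v)) ⊆
      Γ '' (({u, T.parent u} : Set V) ∩ {v, T.parent v})

/-- The angle of the direction from `p` to `q`. -/
noncomputable def dirAngle (p q : ℝ × ℝ) : ℝ :=
  Complex.arg (Complex.ofReal (q.1 - p.1) + Complex.ofReal (q.2 - p.2) * Complex.I)

/-- Normalization of an angle into the window `[a, a + 2π)`. -/
noncomputable def normAngle (a θ : ℝ) : ℝ := θ - 2 * π * (⌊(θ - a) / (2 * π)⌋ : ℤ)

/-- The angle of the direction from `Γ v` to `Γ w`, normalized into `[a, a + 2π)`. -/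
noncomputable def angFrom (Γ : V → ℝ × ℝ) (a : ℝ) (v w : V) : ℝ :=
  normAngle a (dirAngle (Γ v) (Γ w))

/-- A drawing is order-preserving if around every node the counterclockwise cyclic
order of the incident edges is: edge to the parent, then edges to the children in
left-to-right order. -/
def IsOrderPreservingD (T : OTree V) (Γ : V → ℝ × ℝ) : Prop :=
  ∀ v : V, ∃ a : ℝ,
    (∀ c₁ c₂ : V, T.IsChild c₁ v → T.IsChild c₂ v → T.rank c₁ < T.rank c₂ →
      angFrom Γ a v c₁ < angFrom Γ a v c₂) ∧
    (v ≠ T.root → ∀ c : V, T.IsChild c v →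
      angFrom Γ a v (T.parent v) < angFrom Γ a v c)

/-- A grid drawing places every node at integer coordinates. -/
def IsGridD (Γ : V → ℝ × ℝ) : Prop :=
  ∀ v, (∃ a : ℤ, (Γ v).1 = a) ∧ (∃ b : ℤ, (Γ v).2 = b)

/-- The width of a (grid) drawing: number of grid columns met by its bounding box. -/
noncomputable def gW (Γ : V → ℝ × ℝ) : ℝ :=
  sSup (Set.range fun v => (Γ v).1) - sInf (Set.range fun v => (Γ v).1) + 1

/-- The height of a (grid) drawing: number of grid rows met by its bounding box. -/
noncomputable def gH (Γ : V → ℝ × ℝ) : ℝ :=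
  sSup (Set.range fun v => (Γ v).2) - sInf (Set.range fun v => (Γ v).2) + 1

/-- The drawing at time `t` of the linear morph from `Γ₀` to `Γ₁`. -/
def lerpD (t : ℝ) (Γ₀ Γ₁ : V → ℝ × ℝ) : V → ℝ × ℝ :=
  fun v => (1 - t) • Γ₀ v + t • Γ₁ v

/-- The linear morph from `Γ₀` to `Γ₁` is planar. -/
def PlanarStep (T : OTree V) (Γ₀ Γ₁ : V → ℝ × ℝ) : Prop :=
  ∀ t ∈ Set.Icc (0:ℝ) 1, IsPlanarD T (lerpD t Γ₀ Γ₁)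

/-- The linear morph from `Γ₀` to `Γ₁` is upward. -/
def UpwardStep (T : OTree V) (Γ₀ Γ₁ : V → ℝ × ℝ) : Prop :=
  ∀ t ∈ Set.Icc (0:ℝ) 1, IsUpwardD T (lerpD t Γ₀ Γ₁)


section AuxMorphOrder

variable {V : Type} [Fintype V] [DecidableEq V]

private lemma normAngle_mem (a θ : ℝ) : a ≤ normAngle a θ ∧ normAngle a θ < a + 2*π := by
  have h2 : (0:ℝ) < 2*π := by positivity
  have h1 := Int.floor_le ((θ - a) / (2*π))
  have h3 := Int.lt_floor_add_one ((θ - a) / (2*π))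
  have e1 : (⌊(θ - a) / (2*π)⌋ : ℝ) * (2*π) ≤ θ - a := (le_div_iff₀ h2).mp h1
  have e2 : θ - a < ((⌊(θ - a) / (2*π)⌋ : ℝ) + 1) * (2*π) := (div_lt_iff₀ h2).mp h3
  unfold normAngle
  constructor <;> nlinarith

private lemma normAngle_eq_self {a θ : ℝ} (h1 : a ≤ θ) (h2 : θ < a + 2*π) :
    normAngle a θ = θ := by
  have h2' : (0:ℝ) < 2*π := by positivity
  have : ⌊(θ - a) / (2*π)⌋ = 0 := by
    rw [Int.floor_eq_zero_iff]
    constructor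
    · apply div_nonneg (by linarith) (by positivity)
    · rw [div_lt_one h2']; linarith
  simp [normAngle, this]

private lemma normAngle_eq_add {a θ : ℝ} (h1 : a - 2*π ≤ θ) (h2 : θ < a) :
    normAngle a θ = θ + 2*π := by
  have h2' : (0:ℝ) < 2*π := by positivity
  have : ⌊(θ - a) / (2*π)⌋ = -1 := by
    rw [Int.floor_eq_iff]
    constructor
    · push_cast; rw [le_div_iff₀ h2']; linarith
    · push_cast; rw [div_lt_iff₀ h2']; linarith
  rw [normAngle, this]; push_cast; ring

private lemma normAngle_sub (a x y : ℝ) :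
    ∃ m : ℤ, normAngle a y - normAngle a x = y - x + 2*π*m :=
  ⟨⌊(x-a)/(2*π)⌋ - ⌊(y-a)/(2*π)⌋, by unfold normAngle; push_cast; ring⟩

private lemma key0 {a x y₁ y₂ : ℝ} (hb₁ : -(2*π) < y₁ - x) (hb₁' : y₁ - x < 0)
    (hb₂ : -(2*π) < y₂ - x) (hb₂' : y₂ - x < 0)
    (hx1 : normAngle a x < normAngle a y₁) (h12 : normAngle a y₁ < normAngle a y₂) :
    y₁ < y₂ := by
  obtain ⟨m₁, hm₁⟩ := normAngle_sub a x y₁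
  obtain ⟨m₂, hm₂⟩ := normAngle_sub a x y₂
  have wx := normAngle_mem a x
  have w1 := normAngle_mem a y₁
  have w2 := normAngle_mem a y₂
  have hpi := Real.pi_pos
  have hm₁1 : m₁ = 1 := by
    have l1 : (0:ℝ) < m₁ := by nlinarith
    have l2 : (m₁:ℝ) < 2 := by nlinarith
    have i1 : (0:ℤ) < m₁ := by exact_mod_cast l1
    have i2 : (m₁:ℤ) < 2 := by exact_mod_cast l2
    omega
  have hm₂1 : m₂ = 1 := by
    have l1 : (0:ℝ) < m₂ := by nlinarith
    have l2 : (m₂:ℝ) < 2 := by nlinarith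
    have i1 : (0:ℤ) < m₂ := by exact_mod_cast l1
    have i2 : (m₂:ℤ) < 2 := by exact_mod_cast l2
    omega
  rw [hm₁1] at hm₁; rw [hm₂1] at hm₂
  push_cast at hm₁ hm₂
  linarith

private lemma gap0 {a x y : ℝ} (hb : -π < y - x) (hb' : y - x < π)
    (h : normAngle a x < normAngle a y) :
    normAngle a y - normAngle a x = y - x + (if y < x then 2*π else 0) := by
  obtain ⟨m, hm⟩ := normAngle_sub a x y
  have wx := normAngle_mem a x
  have wy := normAngle_mem a y
  have hpi := Real.pi_pos
  have hm01 : m = 0 ∨ m = 1 := by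
    have l1 : (-1:ℝ)/2 < m := by nlinarith
    have l2 : (m:ℝ) < 3/2 := by nlinarith
    have e1 : (-1:ℤ) < m := by
      have : (-1:ℝ) < m := by linarith
      exact_mod_cast this
    have e2 : (m:ℤ) < 2 := by
      have : (m:ℝ) < 2 := by linarith
      exact_mod_cast this
    omega
  rcases lt_trichotomy y x with hyx | hyx | hyx
  · rw [if_pos hyx]
    rcases hm01 with rfl | rfl
    · push_cast at hm; nlinarith
    · push_cast at hm; linarith
  · exfalso; rw [hyx] at h; exact lt_irrefl _ h
  · rw [if_neg (by linarith)]
    rcases hm01 with rfl | rfl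
    · push_cast at hm; linarith
    · push_cast at hm; nlinarith

private lemma cvec_im (p q : ℝ × ℝ) :
    (Complex.ofReal (q.1 - p.1) + Complex.ofReal (q.2 - p.2) * Complex.I).im = q.2 - p.2 := by
  simp

private lemma cvec_re (p q : ℝ × ℝ) :
    (Complex.ofReal (q.1 - p.1) + Complex.ofReal (q.2 - p.2) * Complex.I).re = q.1 - p.1 := by
  simp

private lemma dirAngle_mem_neg {p q : ℝ × ℝ} (h : q.2 < p.2) :
    -π < dirAngle p q ∧ dirAngle p q < 0 := by
  unfold dirAngle
  refine ⟨Complex.neg_pi_lt_arg _, Complex.arg_neg_iff.mpr ?_⟩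
  rw [cvec_im]; linarith

private lemma dirAngle_mem_pos {p q : ℝ × ℝ} (h : p.2 < q.2) :
    0 < dirAngle p q ∧ dirAngle p q < π := by
  unfold dirAngle
  set z := Complex.ofReal (q.1 - p.1) + Complex.ofReal (q.2 - p.2) * Complex.I with hz
  have him : 0 < z.im := by rw [hz, cvec_im]; linarith
  constructor
  · rcases lt_or_eq_of_le (Complex.arg_nonneg_iff.mpr him.le) with h' | h'
    · exact h'
    · exfalso
      have := (Complex.arg_eq_zero_iff (z := z)).mp h'.symm
      linarith [this.2]
  · rcases lt_or_eq_of_le (Complex.arg_le_pi z) with h' | h'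
    · exact h'
    · exfalso
      have := (Complex.arg_eq_pi_iff (z := z)).mp h'
      linarith [this.2]

private lemma pos_on {g : ℝ → ℝ} (hc : ContinuousOn g (Icc 0 1))
    (hne : ∀ s ∈ Icc (0:ℝ) 1, g s ≠ 0) (h0 : 0 < g 0) :
    ∀ s ∈ Icc (0:ℝ) 1, 0 < g s := by
  intro s hs
  rcases (hne s hs).lt_or_gt with h | h
  · exfalso
    have hsub : Icc (0:ℝ) s ⊆ Icc 0 1 := Icc_subset_Icc le_rfl hs.2
    obtain ⟨u, hu, hgu⟩ := intermediate_value_Icc' hs.1 (hc.mono hsub) ⟨h.le, h0.le⟩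
    exact hne u (hsub hu) hgu
  · exact h

private lemma lt_on {f g : ℝ → ℝ} (hf : ContinuousOn f (Icc 0 1)) (hg : ContinuousOn g (Icc 0 1))
    (hne : ∀ s ∈ Icc (0:ℝ) 1, f s ≠ g s) (h0 : f 0 < g 0) :
    ∀ s ∈ Icc (0:ℝ) 1, f s < g s := by
  intro s hs
  have := pos_on (hc := hg.sub hf) (fun u hu => sub_ne_zero.mpr (Ne.symm (hne u hu)))
    (show (0:ℝ) < g 0 - f 0 by linarith) s hs
  have h2 : g s - f s > 0 := this
  linarith

private lemma seg_of_prop {p q₁ q₂ : ℝ × ℝ} {r : ℝ} (h0 : 0 < r) (h1 : r ≤ 1)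
    (hre : r * (q₁.1 - p.1) = q₂.1 - p.1) (him : r * (q₁.2 - p.2) = q₂.2 - p.2) :
    q₂ ∈ segment ℝ q₁ p := by
  refine ⟨r, 1 - r, h0.le, by linarith, by ring, ?_⟩
  apply Prod.ext <;>
    simp only [Prod.fst_add, Prod.snd_add, Prod.smul_fst, Prod.smul_snd, smul_eq_mul] <;>
    linarith

private lemma collinear_mem {p q₁ q₂ : ℝ × ℝ} (h1 : q₁ ≠ p) (h2 : q₂ ≠ p)
    (h : dirAngle p q₁ = dirAngle p q₂) :
    q₁ ∈ segment ℝ q₂ p ∨ q₂ ∈ segment ℝ q₁ p := by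
  set z₁ := Complex.ofReal (q₁.1 - p.1) + Complex.ofReal (q₁.2 - p.2) * Complex.I with hz₁
  set z₂ := Complex.ofReal (q₂.1 - p.1) + Complex.ofReal (q₂.2 - p.2) * Complex.I with hz₂
  have hz₁0 : z₁ ≠ 0 := by
    intro hzz
    apply h1
    have hre := congrArg Complex.re hzz
    have him := congrArg Complex.im hzz
    rw [hz₁] at hre him; rw [cvec_re] at hre; rw [cvec_im] at him
    simp only [Complex.zero_re, Complex.zero_im] at hre him
    exact Prod.ext (by linarith) (by linarith)
  have hz₂0 : z₂ ≠ 0 := by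
    intro hzz
    apply h2
    have hre := congrArg Complex.re hzz
    have him := congrArg Complex.im hzz
    rw [hz₂] at hre him; rw [cvec_re] at hre; rw [cvec_im] at him
    simp only [Complex.zero_re, Complex.zero_im] at hre him
    exact Prod.ext (by linarith) (by linarith)
  have heq : ((‖z₂‖ / ‖z₁‖ : ℝ) : ℂ) * z₁ = z₂ := by
    have := (Complex.arg_eq_arg_iff hz₁0 hz₂0).mp h
    exact_mod_cast this
  set r : ℝ := ‖z₂‖ / ‖z₁‖ with hr
  have hrpos : 0 < r := div_pos (norm_pos_iff.mpr hz₂0) (norm_pos_iff.mpr hz₁0)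
  have hre : r * (q₁.1 - p.1) = q₂.1 - p.1 := by
    have := congrArg Complex.re heq
    rwa [Complex.re_ofReal_mul, hz₁, hz₂, cvec_re, cvec_re] at this
  have him : r * (q₁.2 - p.2) = q₂.2 - p.2 := by
    have := congrArg Complex.im heq
    rwa [Complex.im_ofReal_mul, hz₁, hz₂, cvec_im, cvec_im] at this
  rcases le_or_gt r 1 with hle | hlt
  · exact Or.inr (seg_of_prop hrpos hle hre him)
  · refine Or.inl (seg_of_prop (r := 1/r) (by positivity) ?_ ?_ ?_)
    · rw [div_le_one hrpos]; linarith
    · field_simp; linarith [hre]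
    · field_simp; linarith [him]

private lemma OTree.child_ne (T : OTree V) {c v : V} (h : T.IsChild c v) : c ≠ v := by
  rintro rfl
  obtain ⟨n, hn⟩ := T.reach c
  have hfix : ∀ m, T.parent^[m] c = c := by
    intro m
    induction m with
    | zero => rfl
    | succ m ih => rw [Function.iterate_succ_apply', ih, h.2]
  rw [hfix n] at hn
  exact h.1 hn

private lemma lerpD_zero (Γ₀ Γ₁ : V → ℝ × ℝ) : lerpD 0 Γ₀ Γ₁ = Γ₀ := by
  funext w; simp [lerpD]

private lemma lerpD_one (Γ₀ Γ₁ : V → ℝ × ℝ) : lerpD 1 Γ₀ Γ₁ = Γ₁ := by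
  funext w; simp [lerpD]

private lemma theta_cont (Δ₀ Δ₁ : V → ℝ × ℝ) (v w : V)
    (h : ∀ s ∈ Icc (0:ℝ) 1, (lerpD s Δ₀ Δ₁ w).2 ≠ (lerpD s Δ₀ Δ₁ v).2) :
    ContinuousOn (fun s => dirAngle (lerpD s Δ₀ Δ₁ v) (lerpD s Δ₀ Δ₁ w)) (Icc 0 1) := by
  intro s hs
  have hc : Continuous (fun s : ℝ =>
      Complex.ofReal ((lerpD s Δ₀ Δ₁ w).1 - (lerpD s Δ₀ Δ₁ v).1)
      + Complex.ofReal ((lerpD s Δ₀ Δ₁ w).2 - (lerpD s Δ₀ Δ₁ v).2) * Complex.I) := by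
    simp only [lerpD, Prod.fst_add, Prod.snd_add, Prod.smul_fst, Prod.smul_snd, smul_eq_mul]
    fun_prop
  have him : (Complex.ofReal ((lerpD s Δ₀ Δ₁ w).1 - (lerpD s Δ₀ Δ₁ v).1)
      + Complex.ofReal ((lerpD s Δ₀ Δ₁ w).2 - (lerpD s Δ₀ Δ₁ v).2) * Complex.I).im ≠ 0 := by
    simpa using sub_ne_zero.mpr (h s hs)
  have : ContinuousAt (fun s : ℝ =>
      Complex.arg (Complex.ofReal ((lerpD s Δ₀ Δ₁ w).1 - (lerpD s Δ₀ Δ₁ v).1)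
      + Complex.ofReal ((lerpD s Δ₀ Δ₁ w).2 - (lerpD s Δ₀ Δ₁ v).2) * Complex.I)) s :=
    ContinuousAt.comp (g := Complex.arg)
      (Complex.continuousAt_arg (Complex.mem_slitPlane_iff.mpr (Or.inr him))) hc.continuousAt
  exact this.continuousWithinAt

private lemma step_preserves (T : OTree V) (Δ₀ Δ₁ : V → ℝ × ℝ)
    (hop : IsOrderPreservingD T Δ₀)
    (hpl : PlanarStep T Δ₀ Δ₁) (hup : UpwardStep T Δ₀ Δ₁) :
    ∀ t ∈ Set.Icc (0:ℝ) 1, IsOrderPreservingD T (lerpD t Δ₀ Δ₁) := by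
  classical
  intro t ht v
  have hpi := Real.pi_pos
  have h0mem : (0:ℝ) ∈ Icc (0:ℝ) 1 := ⟨le_rfl, zero_le_one⟩
  have hchild : ∀ s ∈ Icc (0:ℝ) 1, ∀ c, T.IsChild c v →
      -π < dirAngle (lerpD s Δ₀ Δ₁ v) (lerpD s Δ₀ Δ₁ c) ∧
      dirAngle (lerpD s Δ₀ Δ₁ v) (lerpD s Δ₀ Δ₁ c) < 0 := by
    intro s hs c hc
    apply dirAngle_mem_neg
    have := hup s hs c hc.1
    rwa [hc.2] at this
  have hcont : ∀ c, T.IsChild c v →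
      ContinuousOn (fun s => dirAngle (lerpD s Δ₀ Δ₁ v) (lerpD s Δ₀ Δ₁ c)) (Icc 0 1) := by
    intro c hc
    apply theta_cont
    intro s hs
    have := hup s hs c hc.1
    rw [hc.2] at this
    exact ne_of_lt this
  have hdist : ∀ s ∈ Icc (0:ℝ) 1, ∀ c₁ c₂, T.IsChild c₁ v → T.IsChild c₂ v → c₁ ≠ c₂ →
      dirAngle (lerpD s Δ₀ Δ₁ v) (lerpD s Δ₀ Δ₁ c₁) ≠
      dirAngle (lerpD s Δ₀ Δ₁ v) (lerpD s Δ₀ Δ₁ c₂) := by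
    intro s hs c₁ c₂ hc₁ hc₂ hne heq
    have hplan := hpl s hs
    have hinj := hplan.1
    have hn1 : lerpD s Δ₀ Δ₁ c₁ ≠ lerpD s Δ₀ Δ₁ v := fun h => (OTree.child_ne T hc₁) (hinj h)
    have hn2 : lerpD s Δ₀ Δ₁ c₂ ≠ lerpD s Δ₀ Δ₁ v := fun h => (OTree.child_ne T hc₂) (hinj h)
    have hint : ∀ cA cB : V, T.IsChild cA v → T.IsChild cB v → cA ≠ cB →
        ∀ x ∈ ({cA, T.parent cA} : Set V) ∩ {cB, T.parent cB}, x = v := by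
      intro cA cB hcA hcB hAB x hx
      rw [hcA.2, hcB.2] at hx
      simp only [Set.mem_inter_iff, Set.mem_insert_iff, Set.mem_singleton_iff] at hx
      rcases hx.1 with h1 | h1 <;> rcases hx.2 with h2 | h2
      · exfalso
        apply hAB
        first
          | exact h1.trans h2.symm
          | exact h1.trans h2
          | exact h1.symm.trans h2
          | exact h1.symm.trans h2.symm
      all_goals first | exact h1 | exact h1.symm | exact h2 | exact h2.symm
    rcases collinear_mem hn1 hn2 heq with hmem | hmem
    · obtain ⟨x, hx, hΓx⟩ := hplan.2 c₂ c₁ hc₂.1 hc₁.1 (Ne.symm hne)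
        ⟨(by rw [hc₂.2]; exact hmem), left_mem_segment ℝ _ _⟩
      have hxv : x = v := hint c₂ c₁ hc₂ hc₁ (Ne.symm hne) x hx
      rw [hxv] at hΓx
      exact hn1 hΓx.symm
    · obtain ⟨x, hx, hΓx⟩ := hplan.2 c₁ c₂ hc₁.1 hc₂.1 hne
        ⟨(by rw [hc₁.2]; exact hmem), left_mem_segment ℝ _ _⟩
      have hxv : x = v := hint c₁ c₂ hc₁ hc₂ hne x hx
      rw [hxv] at hΓx
      exact hn2 hΓx.symm
  obtain ⟨a₀, hA, hB⟩ := hop v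
  have hA0 : ∀ c₁ c₂ : V, T.IsChild c₁ v → T.IsChild c₂ v → T.rank c₁ < T.rank c₂ →
      normAngle a₀ (dirAngle (lerpD 0 Δ₀ Δ₁ v) (lerpD 0 Δ₀ Δ₁ c₁)) <
      normAngle a₀ (dirAngle (lerpD 0 Δ₀ Δ₁ v) (lerpD 0 Δ₀ Δ₁ c₂)) := by
    intro c₁ c₂ h1 h2 h3
    rw [lerpD_zero]
    exact hA c₁ c₂ h1 h2 h3
  have hB0 : v ≠ T.root → ∀ c : V, T.IsChild c v →
      normAngle a₀ (dirAngle (lerpD 0 Δ₀ Δ₁ v) (lerpD 0 Δ₀ Δ₁ (T.parent v))) <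
      normAngle a₀ (dirAngle (lerpD 0 Δ₀ Δ₁ v) (lerpD 0 Δ₀ Δ₁ c)) := by
    intro hvr c hc
    rw [lerpD_zero]
    exact hB hvr c hc
  by_cases hvr : v = T.root
  · -- root case
    by_cases hex : ∃ c, T.IsChild c v
    · obtain ⟨c0, hc0⟩ := hex
      obtain ⟨cs, hcs_mem, hcs_min⟩ := Finset.exists_min_image
        (Finset.univ.filter fun c => T.IsChild c v) T.rank
        ⟨c0, by simp [hc0]⟩
      have hcs : T.IsChild cs v := by simpa using hcs_mem
      have hmin : ∀ c, T.IsChild c v → T.rank cs ≤ T.rank c := fun c hc =>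
        hcs_min c (by simp [hc])
      have hrklt : ∀ c, T.IsChild c v → c ≠ cs → T.rank cs < T.rank c := by
        intro c hc hne
        refine lt_of_le_of_ne (hmin c hc) (fun h => hne ?_)
        exact (T.rank_inj cs c hcs.1 hc.1 (hcs.2.trans hc.2.symm) h).symm
      set a := dirAngle (lerpD t Δ₀ Δ₁ v) (lerpD t Δ₀ Δ₁ cs) with ha
      have hacs := hchild t ht cs hcs
      -- time 0 gap formula
      have hn0 : ∀ c, T.IsChild c v → c ≠ cs →
          normAngle a₀ (dirAngle (lerpD 0 Δ₀ Δ₁ v) (lerpD 0 Δ₀ Δ₁ c)) -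
          normAngle a₀ (dirAngle (lerpD 0 Δ₀ Δ₁ v) (lerpD 0 Δ₀ Δ₁ cs)) =
          (dirAngle (lerpD 0 Δ₀ Δ₁ v) (lerpD 0 Δ₀ Δ₁ c) -
           dirAngle (lerpD 0 Δ₀ Δ₁ v) (lerpD 0 Δ₀ Δ₁ cs)) +
          (if dirAngle (lerpD 0 Δ₀ Δ₁ v) (lerpD 0 Δ₀ Δ₁ c) <
              dirAngle (lerpD 0 Δ₀ Δ₁ v) (lerpD 0 Δ₀ Δ₁ cs) then 2*π else 0) := by
        intro c hc hne
        have r1 := hchild 0 h0mem c hc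
        have r2 := hchild 0 h0mem cs hcs
        exact gap0 (by linarith) (by linarith) (hA0 cs c hcs hc (hrklt c hc hne))
      -- claim A : value of normAngle a at time t, and a < it
      have claimA : ∀ c, T.IsChild c v → c ≠ cs →
          normAngle a (dirAngle (lerpD t Δ₀ Δ₁ v) (lerpD t Δ₀ Δ₁ c)) =
          dirAngle (lerpD t Δ₀ Δ₁ v) (lerpD t Δ₀ Δ₁ c) +
          (if dirAngle (lerpD 0 Δ₀ Δ₁ v) (lerpD 0 Δ₀ Δ₁ c) <
              dirAngle (lerpD 0 Δ₀ Δ₁ v) (lerpD 0 Δ₀ Δ₁ cs) then 2*π else 0) ∧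
          a < normAngle a (dirAngle (lerpD t Δ₀ Δ₁ v) (lerpD t Δ₀ Δ₁ c)) := by
        intro c hc hne
        have rt := hchild t ht c hc
        by_cases hlt : dirAngle (lerpD 0 Δ₀ Δ₁ v) (lerpD 0 Δ₀ Δ₁ c) <
            dirAngle (lerpD 0 Δ₀ Δ₁ v) (lerpD 0 Δ₀ Δ₁ cs)
        · have hts := lt_on (hcont c hc) (hcont cs hcs)
            (fun s hs => hdist s hs c cs hc hcs hne) hlt t ht
          have heqn : normAngle a (dirAngle (lerpD t Δ₀ Δ₁ v) (lerpD t Δ₀ Δ₁ c)) =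
              dirAngle (lerpD t Δ₀ Δ₁ v) (lerpD t Δ₀ Δ₁ c) + 2*π :=
            normAngle_eq_add (by rw [ha]; linarith) (by rw [ha]; exact hts)
          rw [heqn, if_pos hlt]
          exact ⟨rfl, by linarith⟩
        · have hlt' : dirAngle (lerpD 0 Δ₀ Δ₁ v) (lerpD 0 Δ₀ Δ₁ cs) <
              dirAngle (lerpD 0 Δ₀ Δ₁ v) (lerpD 0 Δ₀ Δ₁ c) :=
            lt_of_le_of_ne (not_lt.mp hlt)
              (hdist 0 h0mem cs c hcs hc (fun h => hne h.symm))
          have hts := lt_on (hcont cs hcs) (hcont c hc)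
            (fun s hs => hdist s hs cs c hcs hc (fun h => hne h.symm)) hlt' t ht
          have heqn : normAngle a (dirAngle (lerpD t Δ₀ Δ₁ v) (lerpD t Δ₀ Δ₁ c)) =
              dirAngle (lerpD t Δ₀ Δ₁ v) (lerpD t Δ₀ Δ₁ c) :=
            normAngle_eq_self (by rw [ha]; exact (hts).le) (by rw [ha]; linarith)
          rw [heqn, if_neg hlt]
          exact ⟨by ring, by rw [ha]; exact hts⟩
      refine ⟨a, ?_, fun h => absurd hvr h⟩
      intro c₁ c₂ hc₁ hc₂ hrank
      unfold angFrom
      have hne12 : c₁ ≠ c₂ := fun h => by rw [h] at hrank; exact lt_irrefl _ hrank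
      have h2cs : c₂ ≠ cs := by
        intro h
        rw [h] at hrank
        exact absurd hrank (not_lt.mpr (hmin c₁ hc₁))
      by_cases h1cs : c₁ = cs
      · subst h1cs
        have hLHS : normAngle a (dirAngle (lerpD t Δ₀ Δ₁ v) (lerpD t Δ₀ Δ₁ c₁)) = a :=
          normAngle_eq_self le_rfl (by linarith)
        rw [hLHS]
        exact (claimA c₂ hc₂ h2cs).2
      · have hg₁ := hn0 c₁ hc₁ h1cs
        have hg₂ := hn0 c₂ hc₂ h2cs
        have h0gap := hA0 c₁ c₂ hc₁ hc₂ hrank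
        have e₁ := (claimA c₁ hc₁ h1cs).1
        have e₂ := (claimA c₂ hc₂ h2cs).1
        rw [e₁, e₂]
        have r01 := hchild 0 h0mem c₁ hc₁
        have r02 := hchild 0 h0mem c₂ hc₂
        have rt1 := hchild t ht c₁ hc₁
        have rt2 := hchild t ht c₂ hc₂
        by_cases b₁ : dirAngle (lerpD 0 Δ₀ Δ₁ v) (lerpD 0 Δ₀ Δ₁ c₁) <
            dirAngle (lerpD 0 Δ₀ Δ₁ v) (lerpD 0 Δ₀ Δ₁ cs) <;>
        by_cases b₂ : dirAngle (lerpD 0 Δ₀ Δ₁ v) (lerpD 0 Δ₀ Δ₁ c₂) <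
            dirAngle (lerpD 0 Δ₀ Δ₁ v) (lerpD 0 Δ₀ Δ₁ cs)
        · rw [if_pos b₁, if_pos b₂]
          rw [if_pos b₁] at hg₁; rw [if_pos b₂] at hg₂
          have h00 : dirAngle (lerpD 0 Δ₀ Δ₁ v) (lerpD 0 Δ₀ Δ₁ c₁) <
              dirAngle (lerpD 0 Δ₀ Δ₁ v) (lerpD 0 Δ₀ Δ₁ c₂) := by linarith
          have := lt_on (hcont c₁ hc₁) (hcont c₂ hc₂)
            (fun s hs => hdist s hs c₁ c₂ hc₁ hc₂ hne12) h00 t ht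
          linarith
        · rw [if_pos b₁, if_neg b₂]
          rw [if_pos b₁] at hg₁; rw [if_neg b₂] at hg₂
          exfalso
          linarith
        · rw [if_neg b₁, if_pos b₂]
          linarith
        · rw [if_neg b₁, if_neg b₂]
          rw [if_neg b₁] at hg₁; rw [if_neg b₂] at hg₂
          have h00 : dirAngle (lerpD 0 Δ₀ Δ₁ v) (lerpD 0 Δ₀ Δ₁ c₁) <
              dirAngle (lerpD 0 Δ₀ Δ₁ v) (lerpD 0 Δ₀ Δ₁ c₂) := by linarith
          have := lt_on (hcont c₁ hc₁) (hcont c₂ hc₂)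
            (fun s hs => hdist s hs c₁ c₂ hc₁ hc₂ hne12) h00 t ht
          linarith
    · refine ⟨0, ?_, fun h => absurd hvr h⟩
      intro c₁ c₂ hc₁ _ _
      exact absurd ⟨c₁, hc₁⟩ hex
  · -- nonroot case
    set a := dirAngle (lerpD t Δ₀ Δ₁ v) (lerpD t Δ₀ Δ₁ (T.parent v)) with ha
    have hpa : 0 < a ∧ a < π := by
      rw [ha]
      exact dirAngle_mem_pos (hup t ht v hvr)
    have hpa0 : 0 < dirAngle (lerpD 0 Δ₀ Δ₁ v) (lerpD 0 Δ₀ Δ₁ (T.parent v)) ∧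
        dirAngle (lerpD 0 Δ₀ Δ₁ v) (lerpD 0 Δ₀ Δ₁ (T.parent v)) < π :=
      dirAngle_mem_pos (hup 0 h0mem v hvr)
    refine ⟨a, ?_, ?_⟩
    · intro c₁ c₂ hc₁ hc₂ hrank
      unfold angFrom
      have hne12 : c₁ ≠ c₂ := fun h => by rw [h] at hrank; exact lt_irrefl _ hrank
      have r01 := hchild 0 h0mem c₁ hc₁
      have r02 := hchild 0 h0mem c₂ hc₂
      have rt1 := hchild t ht c₁ hc₁
      have rt2 := hchild t ht c₂ hc₂
      have h00 : dirAngle (lerpD 0 Δ₀ Δ₁ v) (lerpD 0 Δ₀ Δ₁ c₁) <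
          dirAngle (lerpD 0 Δ₀ Δ₁ v) (lerpD 0 Δ₀ Δ₁ c₂) := by
        apply key0 (x := dirAngle (lerpD 0 Δ₀ Δ₁ v) (lerpD 0 Δ₀ Δ₁ (T.parent v))) (a := a₀)
        · linarith [hpa0.1, hpa0.2, r01.1, r01.2]
        · linarith [hpa0.1, r01.2]
        · linarith [hpa0.1, hpa0.2, r02.1, r02.2]
        · linarith [hpa0.1, r02.2]
        · exact hB0 hvr c₁ hc₁
        · exact hA0 c₁ c₂ hc₁ hc₂ hrank
      have htord := lt_on (hcont c₁ hc₁) (hcont c₂ hc₂)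
        (fun s hs => hdist s hs c₁ c₂ hc₁ hc₂ hne12) h00 t ht
      have e₁ : normAngle a (dirAngle (lerpD t Δ₀ Δ₁ v) (lerpD t Δ₀ Δ₁ c₁)) =
          dirAngle (lerpD t Δ₀ Δ₁ v) (lerpD t Δ₀ Δ₁ c₁) + 2*π :=
        normAngle_eq_add (by linarith [hpa.2, rt1.1]) (by linarith [hpa.1, rt1.2])
      have e₂ : normAngle a (dirAngle (lerpD t Δ₀ Δ₁ v) (lerpD t Δ₀ Δ₁ c₂)) =
          dirAngle (lerpD t Δ₀ Δ₁ v) (lerpD t Δ₀ Δ₁ c₂) + 2*π :=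
        normAngle_eq_add (by linarith [hpa.2, rt2.1]) (by linarith [hpa.1, rt2.2])
      rw [e₁, e₂]
      linarith
    · intro _ c hc
      unfold angFrom
      have rt := hchild t ht c hc
      have eP : normAngle a (dirAngle (lerpD t Δ₀ Δ₁ v) (lerpD t Δ₀ Δ₁ (T.parent v))) = a :=
        normAngle_eq_self (by rw [ha]) (by rw [ha]; linarith)
      have eC : normAngle a (dirAngle (lerpD t Δ₀ Δ₁ v) (lerpD t Δ₀ Δ₁ c)) =
          dirAngle (lerpD t Δ₀ Δ₁ v) (lerpD t Δ₀ Δ₁ c) + 2*π :=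
        normAngle_eq_add (by linarith [hpa.2, rt.1]) (by linarith [hpa.1, rt.2])
      rw [eP, eC]
      linarith [hpa.2, rt.1]

end AuxMorphOrder

/-- Let `Γ₀` and `Γ₁` be two order-preserving strictly-upward
straight-line planar drawings of a rooted ordered tree `T`, and let
`⟨Γ₀ = Δ 0, Δ 1, …, Δ k = Γ₁⟩` be any upward planar morph between them (each linear
step is planar and upward). Then every drawing occurring during the morph — i.e.,
every intermediate drawing of every linear step, including the drawings of the
sequence themselves — is order-preserving. -/
theorem upward_planar_morph_preserves_order (T : OTree V) (Γ₀ Γ₁ : V → ℝ × ℝ)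
    (hop₀ : IsOrderPreservingD T Γ₀) (hop₁ : IsOrderPreservingD T Γ₁)
    (hup₀ : IsUpwardD T Γ₀) (hup₁ : IsUpwardD T Γ₁)
    (hpl₀ : IsPlanarD T Γ₀) (hpl₁ : IsPlanarD T Γ₁)
    (k : ℕ) (Δ : Fin (k + 1) → V → ℝ × ℝ)
    (hfirst : Δ 0 = Γ₀) (hlast : Δ (Fin.last k) = Γ₁)
    (hsteps : ∀ i : Fin k, PlanarStep T (Δ i.castSucc) (Δ i.succ) ∧
      UpwardStep T (Δ i.castSucc) (Δ i.succ)) :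
    ∀ i : Fin k, ∀ t ∈ Set.Icc (0:ℝ) 1,
      IsOrderPreservingD T (lerpD t (Δ i.castSucc) (Δ i.succ)) := by
  have key : ∀ n : ℕ, ∀ hn : n < k + 1, IsOrderPreservingD T (Δ ⟨n, hn⟩) := by
    intro n
    induction n with
    | zero =>
      intro hn
      have e : (⟨0, hn⟩ : Fin (k+1)) = 0 := rfl
      rw [e, hfirst]
      exact hop₀
    | succ m ih =>
      intro hn
      have hm : m < k := Nat.lt_of_succ_lt_succ hn
      have ecs : ((⟨m, hm⟩ : Fin k)).castSucc = (⟨m, by omega⟩ : Fin (k+1)) := by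
        apply Fin.ext; rfl
      have esc : ((⟨m, hm⟩ : Fin k)).succ = (⟨m+1, hn⟩ : Fin (k+1)) := by
        apply Fin.ext; rfl
      have hstep := step_preserves T (Δ ((⟨m, hm⟩ : Fin k)).castSucc)
        (Δ ((⟨m, hm⟩ : Fin k)).succ)
        (by rw [ecs]; exact ih (by omega))
        (hsteps ⟨m, hm⟩).1 (hsteps ⟨m, hm⟩).2 1 ⟨zero_le_one, le_rfl⟩
      rw [lerpD_one, esc] at hstep
      exact hstep
  intro i t ht
  have ecs : i.castSucc = (⟨i.1, by omega⟩ : Fin (k+1)) := by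
    apply Fin.ext; rfl
  exact step_preserves T (Δ i.castSucc) (Δ i.succ)
    (by rw [ecs]; exact key i.1 (by omega)) (hsteps i).1 (hsteps i).2 t ht
end

section
/- Let A, B, C be integers such that A·t² + B·t + C > 0 for every t ∈ [0,1]. Then A·t² + B·t + C ≥ 1/(4·max(A,1)) for every t ∈ [0,1]. -/
/-- Let `A, B, C` be integers such that `A·t² + B·t + C > 0` for
every `t ∈ [0,1]`. Then `A·t² + B·t + C ≥ 1 / (4 · max A 1)` for every `t ∈ [0,1]`. -/
theorem integer_quadratic_positive_lower_bound (A B C : ℤ)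
    (hpos : ∀ t ∈ Set.Icc (0:ℝ) 1, 0 < (A : ℝ) * t ^ 2 + (B : ℝ) * t + (C : ℝ)) :
    ∀ t ∈ Set.Icc (0:ℝ) 1,
      1 / (4 * ((max A 1 : ℤ) : ℝ)) ≤ (A : ℝ) * t ^ 2 + (B : ℝ) * t + (C : ℝ) := by
  intro t ⟨ht0, ht1⟩
  have hM : (1:ℤ) ≤ max A 1 := le_max_right _ _
  have hMR : (1:ℝ) ≤ ((max A 1 : ℤ) : ℝ) := by exact_mod_cast hM
  have hMinv : 1 / (4 * ((max A 1 : ℤ) : ℝ)) ≤ 1 := by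
    rw [div_le_one (by linarith)]; linarith
  -- endpoint values
  have hC : (1:ℤ) ≤ C := by
    have h := hpos 0 ⟨le_refl 0, zero_le_one⟩
    have : (0:ℝ) < (C:ℝ) := by nlinarith
    have : (0:ℤ) < C := by exact_mod_cast this
    omega
  have hABC : (1:ℤ) ≤ A + B + C := by
    have h := hpos 1 ⟨zero_le_one, le_refl 1⟩
    have : (0:ℝ) < ((A + B + C : ℤ) : ℝ) := by push_cast; nlinarith
    have : (0:ℤ) < A + B + C := by exact_mod_cast this
    omega
  have hCR : (1:ℝ) ≤ (C:ℝ) := by exact_mod_cast hC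
  have hABCR : (1:ℝ) ≤ (A:ℝ) + B + C := by exact_mod_cast hABC
  rcases le_or_gt A 0 with hA | hA
  · -- concave/linear case: f(t) ≥ (1-t) f(0) + t f(1) ≥ 1
    have hAR : (A:ℝ) ≤ 0 := by exact_mod_cast hA
    have : (1:ℝ) ≤ (A : ℝ) * t ^ 2 + (B : ℝ) * t + (C : ℝ) := by
      nlinarith [mul_nonneg ht0 (sub_nonneg.mpr hABCR),
        mul_nonneg (sub_nonneg.mpr ht1) (sub_nonneg.mpr hCR),
        mul_nonneg (mul_nonneg ht0 (sub_nonneg.mpr ht1)) (neg_nonneg.mpr hAR)]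
    linarith
  · have hA1 : (1:ℤ) ≤ A := hA
    have hAR : (1:ℝ) ≤ (A:ℝ) := by exact_mod_cast hA1
    have hmax : max A 1 = A := max_eq_left hA1
    rcases lt_or_ge B 0 with hB | hB
    · rcases lt_or_ge B (-2*A) with hB2 | hB2
      · -- vertex beyond 1: f decreasing on [0,1], min at 1
        have hB2R : (B:ℝ) < -2*A := by exact_mod_cast hB2
        have : (1:ℝ) ≤ (A : ℝ) * t ^ 2 + (B : ℝ) * t + (C : ℝ) := by
          nlinarith [mul_nonneg (sub_nonneg.mpr ht1)
            (show (0:ℝ) ≤ -(A:ℝ)*(t+1) - B by nlinarith)]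
        linarith
      · -- vertex in [0,1]
        have hBR : (B:ℝ) < 0 := by exact_mod_cast hB
        have hB2R : (-2*A : ℝ) ≤ B := by exact_mod_cast hB2
        set s : ℝ := -(B:ℝ) / (2*A) with hs
        have hApos : (0:ℝ) < (A:ℝ) := by linarith
        have hs0 : 0 ≤ s := by
          apply div_nonneg <;> linarith
        have hs1 : s ≤ 1 := by
          rw [div_le_one (by linarith)]; linarith
        have hfs := hpos s ⟨hs0, hs1⟩
        have hval : (A:ℝ) * s ^ 2 + (B:ℝ) * s + C = C - (B:ℝ)^2 / (4*A) := by
          rw [hs]; field_simp; ring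
        have hD : (0:ℝ) < ((4*A*C - B^2 : ℤ) : ℝ) := by
          rw [hval] at hfs
          have : (B:ℝ)^2 / (4*A) < C := by linarith
          push_cast
          rw [div_lt_iff₀ (by linarith)] at this
          nlinarith
        have hDZ : (1:ℤ) ≤ 4*A*C - B^2 := by
          have : (0:ℤ) < 4*A*C - B^2 := by exact_mod_cast hD
          omega
        have hDR : (1:ℝ) ≤ 4*A*C - (B:ℝ)^2 := by exact_mod_cast hDZ
        rw [hmax, div_le_iff₀ (by linarith)]
        nlinarith [sq_nonneg (2*(A:ℝ)*t + B)]
    · -- B ≥ 0: f increasing on [0,1], min at 0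
      have hBR : (0:ℝ) ≤ (B:ℝ) := by exact_mod_cast hB
      have : (1:ℝ) ≤ (A : ℝ) * t ^ 2 + (B : ℝ) * t + (C : ℝ) := by nlinarith
      linarith
end

section
/- Let Γ be a planar straight-line drawing of a graph G in which every two distinct vertices are at Euclidean distance at least 2 and every vertex is at distance at least 2 from every edge segment not incident to it. Let Γ'' be the drawing obtained from Γ by moving each vertex to a nearest point with integer coordinates. Then Γ'' is a planar straight-line grid drawing of G and the linear morph ⟨Γ, Γ''⟩ is planar. -/
open Set

variable {V : Type} [Fintype V] [DecidableEq V]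

/-- The straight-line segment representing the edge `uv` in the drawing `Γ`. -/
def gSeg (Γ : V → EuclideanSpace ℝ (Fin 2)) (u v : V) : Set (EuclideanSpace ℝ (Fin 2)) :=
  segment ℝ (Γ u) (Γ v)

/-- A straight-line drawing of a graph is planar if it is injective on vertices and
any two distinct edge segments meet only in (images of) shared endpoints. -/
def GPlanar (G : SimpleGraph V) (Γ : V → EuclideanSpace ℝ (Fin 2)) : Prop :=
  Function.Injective Γ ∧
  ∀ u v u' v' : V, G.Adj u v → G.Adj u' v' →
    ¬ (u = u' ∧ v = v') → ¬ (u = v' ∧ v = u') →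
    gSeg Γ u v ∩ gSeg Γ u' v' ⊆ Γ '' (({u, v} : Set V) ∩ {u', v'})

/-- A grid drawing places every vertex at integer coordinates. -/
def GGrid (Γ : V → EuclideanSpace ℝ (Fin 2)) : Prop :=
  ∀ v, (∃ a : ℤ, Γ v 0 = a) ∧ (∃ b : ℤ, Γ v 1 = b)

/-- The set of distances between pairs of geometric objects of a drawing:
distances between pairs of distinct vertices, and distances between a vertex and a
non-incident edge segment. -/
def resDistSet (G : SimpleGraph V) (Γ : V → EuclideanSpace ℝ (Fin 2)) : Set ℝ :=
  {d | (∃ u v : V, u ≠ v ∧ d = dist (Γ u) (Γ v)) ∨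
       (∃ u v w : V, G.Adj u v ∧ w ≠ u ∧ w ≠ v ∧
          d = Metric.infDist (Γ w) (gSeg Γ u v))}

/-- The resolution of a drawing: the ratio between the largest and the smallest
distance between a pair of geometric objects of the drawing. -/
noncomputable def resolution (G : SimpleGraph V) (Γ : V → EuclideanSpace ℝ (Fin 2)) : ℝ :=
  sSup (resDistSet G Γ) / sInf (resDistSet G Γ)

/-- The drawing at time `t` of the linear morph from `Γ₀` to `Γ₁`. -/
noncomputable def glerp (t : ℝ) (Γ₀ Γ₁ : V → EuclideanSpace ℝ (Fin 2)) :
    V → EuclideanSpace ℝ (Fin 2) :=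
  fun v => (1 - t) • Γ₀ v + t • Γ₁ v

/-- The linear morph from `Γ₀` to `Γ₁` is planar. -/
def GPlanarStep (G : SimpleGraph V) (Γ₀ Γ₁ : V → EuclideanSpace ℝ (Fin 2)) : Prop :=
  ∀ t ∈ Set.Icc (0:ℝ) 1, GPlanar G (glerp t Γ₀ Γ₁)

/-- A point of the Euclidean plane with integer coordinates. -/
def IsIntPoint (q : EuclideanSpace ℝ (Fin 2)) : Prop :=
  (∃ a : ℤ, q 0 = a) ∧ (∃ b : ℤ, q 1 = b)

local notation "E2" => EuclideanSpace ℝ (Fin 2)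

lemma inner_zero_of_local_min (v w : E2) (η : ℝ) (hη : 0 < η)
    (hm : ∀ h : ℝ, |h| ≤ η → ‖v‖ ≤ ‖v + h • w‖) : inner ℝ v w = 0 := by
  by_cases hw : w = 0
  · simp [hw]
  by_contra hc
  set c : ℝ := inner ℝ v w with hcdef
  have hwn : ‖w‖ ≠ 0 := norm_ne_zero_iff.mpr hw
  have hw2 : (0:ℝ) < ‖w‖ ^ 2 := by positivity
  set τ : ℝ := min (η / |c|) (1 / ‖w‖ ^ 2) with hτdef
  have hcpos : 0 < |c| := abs_pos.mpr hc
  have hτpos : 0 < τ := lt_min (div_pos hη hcpos) (by positivity)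
  set h : ℝ := -c * τ with hhdef
  have hhabs : |h| ≤ η := by
    have : |h| = |c| * τ := by
      rw [hhdef, abs_mul, abs_neg, abs_of_pos hτpos]
    rw [this]
    calc |c| * τ ≤ |c| * (η / |c|) := by
          exact mul_le_mul_of_nonneg_left (min_le_left _ _) (le_of_lt hcpos)
      _ = η := by field_simp
  have hnorm := hm h hhabs
  have hsq : ‖v‖ ^ 2 ≤ ‖v + h • w‖ ^ 2 := by
    have := norm_nonneg v
    nlinarith [norm_nonneg (v + h • w)]
  rw [norm_add_sq_real, real_inner_smul_right, norm_smul, mul_pow] at hsq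
  have hineq : 0 ≤ 2 * (h * c) + h ^ 2 * ‖w‖ ^ 2 := by
    simp only [Real.norm_eq_abs, sq_abs] at hsq
    nlinarith
  have hval : 2 * (h * c) + h ^ 2 * ‖w‖ ^ 2 = τ * c ^ 2 * (τ * ‖w‖ ^ 2 - 2) := by
    rw [hhdef]; ring
  have hτw : τ * ‖w‖ ^ 2 ≤ 1 := by
    calc τ * ‖w‖ ^ 2 ≤ (1 / ‖w‖ ^ 2) * ‖w‖ ^ 2 :=
          mul_le_mul_of_nonneg_right (min_le_right _ _) (le_of_lt hw2)
      _ = 1 := by field_simp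
  have h1 : τ * ‖w‖ ^ 2 - 2 ≤ -1 := by linarith
  have h2 : 0 < τ * c ^ 2 := mul_pos hτpos (sq_pos_of_ne_zero hc)
  have h3 : τ * c ^ 2 * (τ * ‖w‖ ^ 2 - 2) ≤ τ * c ^ 2 * (-1) :=
    mul_le_mul_of_nonneg_left h1 h2.le
  linarith

open Module in
lemma seg_sep (a b c d : E2) (hab : a ≠ b) (hcd : c ≠ d)
    (hdisj : ∀ x, x ∈ segment ℝ a b → x ∈ segment ℝ c d → False)
    (ha : ∀ q ∈ segment ℝ c d, 2 ≤ dist a q)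
    (hb : ∀ q ∈ segment ℝ c d, 2 ≤ dist b q)
    (hc : ∀ p ∈ segment ℝ a b, 2 ≤ dist c p)
    (hd : ∀ p ∈ segment ℝ a b, 2 ≤ dist d p) :
    ∀ p ∈ segment ℝ a b, ∀ q ∈ segment ℝ c d, 2 ≤ dist p q := by
  set w₁ := b - a with hw₁def
  set w₂ := d - c with hw₂def
  set P : ℝ → E2 := fun s => a + s • w₁ with hP
  set Q : ℝ → E2 := fun s => c + s • w₂ with hQ
  have hPmem : ∀ s ∈ Icc (0:ℝ) 1, P s ∈ segment ℝ a b := by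
    intro s hs; rw [segment_eq_image']; exact ⟨s, hs, rfl⟩
  have hQmem : ∀ s ∈ Icc (0:ℝ) 1, Q s ∈ segment ℝ c d := by
    intro s hs; rw [segment_eq_image']; exact ⟨s, hs, rfl⟩
  set F : ℝ × ℝ → ℝ := fun z => dist (P z.1) (Q z.2) with hF
  have hbd : ∀ s s' : ℝ, s ∈ Icc (0:ℝ) 1 → s' ∈ Icc (0:ℝ) 1 →
      (s = 0 ∨ s = 1 ∨ s' = 0 ∨ s' = 1) → 2 ≤ F (s, s') := by
    intro s s' hs hs' hcase
    rcases hcase with rfl | rfl | rfl | rfl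
    · have : P 0 = a := by simp [hP]
      simpa [hF, this] using ha _ (hQmem _ hs')
    · have : P 1 = b := by simp [hP, hw₁def]
      simpa [hF, this] using hb _ (hQmem _ hs')
    · have : Q 0 = c := by simp [hQ]
      simpa [hF, this, dist_comm] using hc _ (hPmem _ hs)
    · have : Q 1 = d := by simp [hQ, hw₂def]
      simpa [hF, this, dist_comm] using hd _ (hPmem _ hs)
  have key : ∀ s ∈ Icc (0:ℝ) 1, ∀ s' ∈ Icc (0:ℝ) 1, 2 ≤ F (s, s') := by
    have hKc : IsCompact ((Icc (0:ℝ) 1) ×ˢ (Icc (0:ℝ) 1)) := isCompact_Icc.prod isCompact_Icc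
    have hKne : ((Icc (0:ℝ) 1) ×ˢ (Icc (0:ℝ) 1)).Nonempty := ⟨(0,0), by simp⟩
    have hFcont : ContinuousOn F ((Icc (0:ℝ) 1) ×ˢ (Icc (0:ℝ) 1)) := by
      apply Continuous.continuousOn; fun_prop
    obtain ⟨z₀, hz₀, hmin⟩ := hKc.exists_isMinOn hKne hFcont
    obtain ⟨s₀, s₀'⟩ := z₀
    obtain ⟨hs₀, hs₀'⟩ := Set.mem_prod.mp hz₀
    suffices h2 : 2 ≤ F (s₀, s₀') by
      intro s hs s' hs'
      exact le_trans h2 (isMinOn_iff.mp hmin (s, s') (Set.mem_prod.mpr ⟨hs, hs'⟩))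
    by_cases e1 : s₀ = 0
    · exact hbd _ _ hs₀ hs₀' (Or.inl e1)
    by_cases e2 : s₀ = 1
    · exact hbd _ _ hs₀ hs₀' (Or.inr (Or.inl e2))
    by_cases e3 : s₀' = 0
    · exact hbd _ _ hs₀ hs₀' (Or.inr (Or.inr (Or.inl e3)))
    by_cases e4 : s₀' = 1
    · exact hbd _ _ hs₀ hs₀' (Or.inr (Or.inr (Or.inr e4)))
    have h00 : 0 < s₀ := lt_of_le_of_ne hs₀.1 (Ne.symm e1)
    have h01 : s₀ < 1 := lt_of_le_of_ne hs₀.2 e2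
    have h10 : 0 < s₀' := lt_of_le_of_ne hs₀'.1 (Ne.symm e3)
    have h11 : s₀' < 1 := lt_of_le_of_ne hs₀'.2 e4
    set n := P s₀ - Q s₀' with hn
    have hnne : n ≠ 0 := by
      intro h
      exact hdisj (P s₀) (hPmem _ hs₀) (by rw [sub_eq_zero.mp h]; exact hQmem _ hs₀')
    have hFn : F (s₀, s₀') = ‖n‖ := by simp [hF, hn, dist_eq_norm]
    have hw₁ : inner ℝ n w₁ = 0 := by
      apply inner_zero_of_local_min n w₁ (min s₀ (1 - s₀)) (lt_min h00 (by linarith))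
      intro h hh
      obtain ⟨hh1, hh2⟩ := abs_le.mp hh
      have hm1 := min_le_left s₀ (1 - s₀)
      have hm2 := min_le_right s₀ (1 - s₀)
      have hsh : s₀ + h ∈ Icc (0:ℝ) 1 := ⟨by linarith, by linarith⟩
      have hlow := isMinOn_iff.mp hmin (s₀ + h, s₀') (Set.mem_prod.mpr ⟨hsh, hs₀'⟩)
      have hrw : F (s₀ + h, s₀') = ‖n + h • w₁‖ := by
        simp only [hF, hn, hP, hQ, dist_eq_norm]
        congr 1
        module
      rw [hrw] at hlow
      linarith [hFn]
    have hw₂ : inner ℝ n w₂ = 0 := by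
      have := inner_zero_of_local_min n (-w₂) (min s₀' (1 - s₀')) (lt_min h10 (by linarith)) ?_
      · rw [inner_neg_right, neg_eq_zero] at this; exact this
      intro h hh
      obtain ⟨hh1, hh2⟩ := abs_le.mp hh
      have hm1 := min_le_left s₀' (1 - s₀')
      have hm2 := min_le_right s₀' (1 - s₀')
      have hsh : s₀' + h ∈ Icc (0:ℝ) 1 := ⟨by linarith, by linarith⟩
      have hlow := isMinOn_iff.mp hmin (s₀, s₀' + h) (Set.mem_prod.mpr ⟨hs₀, hsh⟩)
      have hrw : F (s₀, s₀' + h) = ‖n + h • (-w₂)‖ := by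
        simp only [hF, hn, hP, hQ, dist_eq_norm]
        congr 1
        module
      rw [hrw] at hlow
      linarith [hFn]
    have hw₁ne : w₁ ≠ 0 := sub_ne_zero.mpr (Ne.symm hab)
    have hw₂ne : w₂ ≠ 0 := sub_ne_zero.mpr (Ne.symm hcd)
    have hmemW : ∀ u : E2, inner ℝ n u = 0 → u ∈ (ℝ ∙ n)ᗮ := fun u hu =>
      Submodule.mem_orthogonal_singleton_iff_inner_right.mpr hu
    have hrk : finrank ℝ ((ℝ ∙ n)ᗮ) = 1 := by
      have h1 := Submodule.finrank_add_finrank_orthogonal (K := (ℝ ∙ n))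
      rw [finrank_span_singleton hnne] at h1
      rw [finrank_euclideanSpace_fin] at h1
      omega
    have hspan : (ℝ ∙ w₁) = (ℝ ∙ n)ᗮ := by
      apply Submodule.eq_of_le_of_finrank_le
        ((Submodule.span_singleton_le_iff_mem _ _).mpr (hmemW _ hw₁))
      rw [hrk, finrank_span_singleton hw₁ne]
    obtain ⟨μ, hμ⟩ : ∃ μ : ℝ, μ • w₁ = w₂ :=
      Submodule.mem_span_singleton.mp (hspan ▸ hmemW _ hw₂)
    have hμne : μ ≠ 0 := by
      rintro rfl; rw [zero_smul] at hμ; exact hw₂ne hμ.symm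
    have hFval : ∀ s s' : ℝ, F (s, s') = ‖(a - c) + (s - μ * s') • w₁‖ := by
      intro s s'
      simp only [hF, hP, hQ, dist_eq_norm, ← hμ]
      congr 1
      module
    obtain ⟨s₁, s₁', hs₁, hs₁', heq, hbdy⟩ :
        ∃ s₁ s₁', s₁ ∈ Icc (0:ℝ) 1 ∧ s₁' ∈ Icc (0:ℝ) 1 ∧
          s₁ - μ * s₁' = s₀ - μ * s₀' ∧ (s₁ = 0 ∨ s₁ = 1 ∨ s₁' = 0 ∨ s₁' = 1) := by
      rcases hμne.lt_or_gt with hμneg | hμpos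
      · set ε := min (s₀ / (-μ)) (1 - s₀') with hε
        have hεdiv : 0 ≤ s₀ / (-μ) := div_nonneg h00.le (by linarith)
        have hε0 : 0 ≤ ε := le_min hεdiv (by linarith)
        have hcanc : μ * (s₀ / (-μ)) = -s₀ := by
          rw [div_neg, mul_neg, ← mul_div_assoc, mul_div_cancel_left₀ _ hμne]
        have hμε1 : μ * ε ≥ -s₀ := by
          have h' : μ * ε ≥ μ * (s₀ / (-μ)) :=
            mul_le_mul_of_nonpos_left (min_le_left _ _) hμneg.le
          linarith
        have hμε2 : μ * ε ≤ 0 := mul_nonpos_of_nonpos_of_nonneg hμneg.le hε0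
        refine ⟨s₀ + μ * ε, s₀' + ε, ⟨by linarith, by linarith⟩,
          ⟨by linarith, by linarith [min_le_right (s₀ / (-μ)) (1 - s₀')]⟩, by ring, ?_⟩
        rcases min_cases (s₀ / (-μ)) (1 - s₀') with ⟨hm', _⟩ | ⟨hm', _⟩
        · left
          have : μ * ε = -s₀ := by rw [hε, hm']; exact hcanc
          linarith
        · right; right; right
          rw [hε, hm']; ring
      · set ε := min ((1 - s₀) / μ) (1 - s₀') with hε
        have hεdiv : 0 ≤ (1 - s₀) / μ := div_nonneg (by linarith) hμpos.le
        have hε0 : 0 ≤ ε := le_min hεdiv (by linarith)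
        have hcanc : μ * ((1 - s₀) / μ) = 1 - s₀ := by
          rw [← mul_div_assoc, mul_div_cancel_left₀ _ hμne]
        have hμε1 : μ * ε ≤ 1 - s₀ := by
          have h' : μ * ε ≤ μ * ((1 - s₀) / μ) :=
            mul_le_mul_of_nonneg_left (min_le_left _ _) hμpos.le
          linarith
        have hμε2 : 0 ≤ μ * ε := mul_nonneg hμpos.le hε0
        refine ⟨s₀ + μ * ε, s₀' + ε, ⟨by linarith, by linarith⟩,
          ⟨by linarith, by linarith [min_le_right ((1 - s₀) / μ) (1 - s₀')]⟩, by ring, ?_⟩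
        rcases min_cases ((1 - s₀) / μ) (1 - s₀') with ⟨hm', _⟩ | ⟨hm', _⟩
        · right; left
          have : μ * ε = 1 - s₀ := by rw [hε, hm']; exact hcanc
          linarith
        · right; right; right
          rw [hε, hm']; ring
    have : F (s₀, s₀') = F (s₁, s₁') := by rw [hFval, hFval, heq]
    rw [this]
    exact hbd _ _ hs₁ hs₁' hbdy
  intro p hp q hq
  rw [segment_eq_image'] at hp hq
  obtain ⟨s, hs, rfl⟩ := hp
  obtain ⟨s', hs', rfl⟩ := hq
  exact key s hs s' hs'


lemma interp_move (A B A' B' : E2) (M s : ℝ) (hs : s ∈ Icc (0:ℝ) 1)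
    (hA : dist A' A ≤ M) (hB : dist B' B ≤ M) :
    dist (A' + s • (B' - A')) (A + s • (B - A)) ≤ M := by
  have hM : 0 ≤ M := le_trans dist_nonneg hA
  have hrw : (A' + s • (B' - A')) - (A + s • (B - A))
      = (1 - s) • (A' - A) + s • (B' - B) := by module
  rw [dist_eq_norm, hrw]
  calc ‖(1 - s) • (A' - A) + s • (B' - B)‖
      ≤ ‖(1 - s) • (A' - A)‖ + ‖s • (B' - B)‖ := norm_add_le _ _
    _ = (1 - s) * ‖A' - A‖ + s * ‖B' - B‖ := by
        rw [norm_smul, norm_smul, Real.norm_eq_abs, Real.norm_eq_abs,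
          abs_of_nonneg (by linarith [hs.2]), abs_of_nonneg hs.1]
    _ ≤ (1 - s) * M + s * M := by
        have h1 : ‖A' - A‖ ≤ M := by rwa [dist_eq_norm] at hA
        have h2 : ‖B' - B‖ ≤ M := by rwa [dist_eq_norm] at hB
        have := hs.1; have := hs.2
        nlinarith
    _ = M := by ring

lemma moved_not_mem (A B W A0 B0 W0 : E2) (M : ℝ) (hM : 2 * M < 2)
    (hA : dist A A0 ≤ M) (hB : dist B B0 ≤ M) (hW : dist W W0 ≤ M)
    (hsep : ∀ z ∈ segment ℝ A0 B0, 2 ≤ dist W0 z) :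
    W ∉ segment ℝ A B := by
  intro hmem
  rw [segment_eq_image'] at hmem
  obtain ⟨s, hs, hWeq⟩ := hmem
  replace hWeq : A + s • (B - A) = W := hWeq
  have h1 : dist W (A0 + s • (B0 - A0)) ≤ M := by
    rw [← hWeq]; exact interp_move A0 B0 A B M s hs hA hB
  have h2 : 2 ≤ dist W0 (A0 + s • (B0 - A0)) := by
    apply hsep
    rw [segment_eq_image']
    exact ⟨s, hs, rfl⟩
  have h3 := dist_triangle W0 W (A0 + s • (B0 - A0))
  rw [dist_comm W0 W] at h3
  linarith

lemma shared_inter (A B C : E2) (hC : C ∉ segment ℝ A B) (hB : B ∉ segment ℝ A C) :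
    segment ℝ A B ∩ segment ℝ A C ⊆ {A} := by
  intro x ⟨hx1, hx2⟩
  rw [segment_eq_image'] at hx1 hx2
  obtain ⟨s, hs, hxs⟩ := hx1
  obtain ⟨s', hs', hxs'⟩ := hx2
  replace hxs : A + s • (B - A) = x := hxs
  replace hxs' : A + s' • (C - A) = x := hxs'
  rcases eq_or_lt_of_le hs.1 with h0 | h0
  · simp only [mem_singleton_iff]
    rw [← hxs, ← h0, zero_smul, add_zero]
  rcases eq_or_lt_of_le hs'.1 with h0' | h0'
  · simp only [mem_singleton_iff]
    rw [← hxs', ← h0', zero_smul, add_zero]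
  exfalso
  have hkey : s • (B - A) = s' • (C - A) := by
    have := hxs.trans hxs'.symm
    have h := congrArg (fun y => y - A) this
    simpa using h
  rcases le_or_gt s s' with hss | hss
  · apply hC
    rw [segment_eq_image']
    refine ⟨s / s', ⟨by positivity, div_le_one_of_le₀ hss (le_of_lt h0')⟩, ?_⟩
    have hc : (s / s') • (B - A) = C - A := by
      rw [div_eq_mul_inv, mul_comm, mul_smul, hkey, ← mul_smul, inv_mul_cancel₀ (ne_of_gt h0'), one_smul]
    show A + (s / s') • (B - A) = C
    rw [hc]; abel
  · apply hB
    rw [segment_eq_image']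
    refine ⟨s' / s, ⟨by positivity, div_le_one_of_le₀ hss.le (le_of_lt h0)⟩, ?_⟩
    have hc : (s' / s) • (C - A) = B - A := by
      rw [div_eq_mul_inv, mul_comm, mul_smul, ← hkey, ← mul_smul, inv_mul_cancel₀ (ne_of_gt h0), one_smul]
    show A + (s' / s) • (C - A) = B
    rw [hc]; abel

/-- Let `Γ` be a planar straight-line drawing of a graph `G` in
which every two distinct vertices are at distance at least `2` and every vertex is at
distance at least `2` from every edge segment not incident to it. Let `Γ''` be
obtained from `Γ` by moving each vertex to a nearest point with integer coordinates.
Then `Γ''` is a planar straight-line grid drawing of `G` and the linear morph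
`⟨Γ, Γ''⟩` is planar. -/
theorem snap_to_grid_planar (G : SimpleGraph V) (Γ Γ'' : V → EuclideanSpace ℝ (Fin 2))
    (hpl : GPlanar G Γ)
    (hvv : ∀ u v : V, u ≠ v → 2 ≤ dist (Γ u) (Γ v))
    (hve : ∀ w u v : V, G.Adj u v → w ≠ u → w ≠ v →
      2 ≤ Metric.infDist (Γ w) (gSeg Γ u v))
    (hint : ∀ v, IsIntPoint (Γ'' v))
    (hnearest : ∀ v (q : EuclideanSpace ℝ (Fin 2)), IsIntPoint q →
      dist (Γ v) (Γ'' v) ≤ dist (Γ v) q) :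
    GGrid Γ'' ∧ GPlanar G Γ'' ∧ GPlanarStep G Γ Γ'' := by
  set M : ℝ := Real.sqrt (1/2) with hMdef
  have hMnn : 0 ≤ M := Real.sqrt_nonneg _
  have hM2 : 2 * M < 2 := by
    have : M < 1 := by
      rw [hMdef]
      rw [show (1:ℝ) = Real.sqrt 1 by rw [Real.sqrt_one]]
      exact Real.sqrt_lt_sqrt (by norm_num) (by norm_num)
    linarith
  have hsnap : ∀ v, dist (Γ v) (Γ'' v) ≤ M := by
    intro v
    set q : E2 := WithLp.toLp 2 (fun i => ((round (Γ v i) : ℤ) : ℝ)) with hq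
    have hqint : IsIntPoint q := ⟨⟨round (Γ v 0), rfl⟩, ⟨round (Γ v 1), rfl⟩⟩
    refine le_trans (hnearest v q hqint) ?_
    rw [EuclideanSpace.dist_eq, hMdef]
    apply Real.sqrt_le_sqrt
    rw [Fin.sum_univ_two]
    have hb : ∀ i : Fin 2, dist (Γ v i) (q i) ^ 2 ≤ 1/4 := by
      intro i
      have h1 : dist (Γ v i) (q i) ≤ 1/2 := by
        rw [hq, Real.dist_eq]
        exact abs_sub_round (Γ v i)
      nlinarith [dist_nonneg (x := Γ v i) (y := q i)]
    linarith [hb 0, hb 1]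
  have hsep : ∀ w p q : V, G.Adj p q → w ≠ p → w ≠ q →
      ∀ z ∈ segment ℝ (Γ p) (Γ q), 2 ≤ dist (Γ w) z := by
    intro w p q ha h1 h2 z hz
    exact le_trans (hve w p q ha h1 h2) (Metric.infDist_le_dist_of_mem hz)
  have hstep : GPlanarStep G Γ Γ'' := by
    intro t ht
    set Δ := glerp t Γ Γ'' with hΔ
    have hmv : ∀ v, dist (Δ v) (Γ v) ≤ M := by
      intro v
      have hrw : Δ v - Γ v = t • (Γ'' v - Γ v) := by
        rw [hΔ]; show (1 - t) • Γ v + t • Γ'' v - Γ v = _; module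
      rw [dist_eq_norm, hrw, norm_smul, Real.norm_eq_abs, abs_of_nonneg ht.1]
      calc t * ‖Γ'' v - Γ v‖ ≤ 1 * ‖Γ'' v - Γ v‖ :=
            mul_le_mul_of_nonneg_right ht.2 (norm_nonneg _)
        _ = dist (Γ v) (Γ'' v) := by rw [one_mul, ← dist_eq_norm, dist_comm]
        _ ≤ M := hsnap v
    have hinj : Function.Injective Δ := by
      intro u v huv
      by_contra hne
      have h2 := hvv u v hne
      have e : dist (Δ u) (Δ v) = 0 := by rw [huv, dist_self]
      have t4 := dist_triangle4 (Γ u) (Δ u) (Δ v) (Γ v)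
      have c1 : dist (Γ u) (Δ u) ≤ M := by rw [dist_comm]; exact hmv u
      have c2 : dist (Δ v) (Γ v) ≤ M := hmv v
      linarith
    refine ⟨hinj, ?_⟩
    intro u v u' v' huv hu'v' hex1 hex2
    have main : ∀ a z z' : V, G.Adj a z → G.Adj a z' → z ≠ z' →
        segment ℝ (Δ a) (Δ z) ∩ segment ℝ (Δ a) (Δ z') ⊆ {Δ a} := by
      intro a z z' h1 h2 h3
      exact shared_inter _ _ _
        (moved_not_mem _ _ _ (Γ a) (Γ z) (Γ z') M hM2 (hmv a) (hmv z) (hmv z')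
          (hsep z' a z h1 h2.ne' h3.symm))
        (moved_not_mem _ _ _ (Γ a) (Γ z') (Γ z) M hM2 (hmv a) (hmv z') (hmv z)
          (hsep z a z' h2 h1.ne' h3))
    by_cases h_uu' : u = u'
    · subst h_uu'
      have hvv' : v ≠ v' := fun h => hex1 ⟨rfl, h⟩
      intro x hx
      have hxa := main u v v' huv hu'v' hvv' hx
      exact ⟨u, by simp, (mem_singleton_iff.mp hxa).symm⟩
    by_cases h_uv' : u = v'
    · subst h_uv'
      have hvu' : v ≠ u' := fun h => hex2 ⟨rfl, h⟩
      intro x hx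
      have hx' : x ∈ segment ℝ (Δ u) (Δ v) ∩ segment ℝ (Δ u) (Δ u') :=
        ⟨hx.1, (segment_symm ℝ (Δ u') (Δ u)) ▸ hx.2⟩
      have hxa := main u v u' huv hu'v'.symm hvu' hx'
      exact ⟨u, by simp, (mem_singleton_iff.mp hxa).symm⟩
    by_cases h_vu' : v = u'
    · subst h_vu'
      have huv'' : u ≠ v' := fun h => hex2 ⟨h, rfl⟩
      intro x hx
      have hx' : x ∈ segment ℝ (Δ v) (Δ u) ∩ segment ℝ (Δ v) (Δ v') :=
        ⟨(segment_symm ℝ (Δ u) (Δ v)) ▸ hx.1, hx.2⟩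
      have hxa := main v u v' huv.symm hu'v' huv'' hx'
      exact ⟨v, by simp, (mem_singleton_iff.mp hxa).symm⟩
    by_cases h_vv' : v = v'
    · subst h_vv'
      have huu'' : u ≠ u' := fun h => hex1 ⟨h, rfl⟩
      intro x hx
      have hx' : x ∈ segment ℝ (Δ v) (Δ u) ∩ segment ℝ (Δ v) (Δ u') :=
        ⟨(segment_symm ℝ (Δ u) (Δ v)) ▸ hx.1, (segment_symm ℝ (Δ u') (Δ v)) ▸ hx.2⟩
      have hxa := main v u u' huv.symm hu'v'.symm huu'' hx'
      exact ⟨v, by simp, (mem_singleton_iff.mp hxa).symm⟩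
    -- all four distinct
    have hdisj0 : ∀ x, x ∈ segment ℝ (Γ u) (Γ v) → x ∈ segment ℝ (Γ u') (Γ v') → False := by
      intro x h1 h2
      obtain ⟨w, hw, _⟩ := hpl.2 u v u' v' huv hu'v' hex1 hex2 ⟨h1, h2⟩
      obtain ⟨hw1, hw2⟩ := hw
      simp only [mem_insert_iff, mem_singleton_iff] at hw1 hw2
      rcases hw1 with rfl | rfl <;> rcases hw2 with h | h
      · exact h_uu' h
      · exact h_uv' h
      · exact h_vu' h
      · exact h_vv' h
    have hsepall := seg_sep (Γ u) (Γ v) (Γ u') (Γ v')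
      (fun h => huv.ne (hpl.1 h)) (fun h => hu'v'.ne (hpl.1 h)) hdisj0
      (hsep u u' v' hu'v' h_uu' h_uv')
      (hsep v u' v' hu'v' h_vu' h_vv')
      (hsep u' u v huv (Ne.symm h_uu') (Ne.symm h_vu'))
      (hsep v' u v huv (Ne.symm h_uv') (Ne.symm h_vv'))
    intro x hx
    exfalso
    obtain ⟨hx1, hx2⟩ := hx
    rw [show gSeg Δ u v = segment ℝ (Δ u) (Δ v) from rfl, segment_eq_image'] at hx1
    rw [show gSeg Δ u' v' = segment ℝ (Δ u') (Δ v') from rfl, segment_eq_image'] at hx2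
    obtain ⟨s, hs, hxs⟩ := hx1
    obtain ⟨s', hs', hxs'⟩ := hx2
    replace hxs : Δ u + s • (Δ v - Δ u) = x := hxs
    replace hxs' : Δ u' + s' • (Δ v' - Δ u') = x := hxs'
    have hp : Γ u + s • (Γ v - Γ u) ∈ segment ℝ (Γ u) (Γ v) := by
      rw [segment_eq_image']; exact ⟨s, hs, rfl⟩
    have hq : Γ u' + s' • (Γ v' - Γ u') ∈ segment ℝ (Γ u') (Γ v') := by
      rw [segment_eq_image']; exact ⟨s', hs', rfl⟩
    have h2le := hsepall _ hp _ hq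
    have d1 : dist x (Γ u + s • (Γ v - Γ u)) ≤ M := by
      rw [← hxs]; exact interp_move (Γ u) (Γ v) (Δ u) (Δ v) M s hs (hmv u) (hmv v)
    have d2 : dist x (Γ u' + s' • (Γ v' - Γ u')) ≤ M := by
      rw [← hxs']; exact interp_move (Γ u') (Γ v') (Δ u') (Δ v') M s' hs' (hmv u') (hmv v')
    have t3 := dist_triangle (Γ u + s • (Γ v - Γ u)) x (Γ u' + s' • (Γ v' - Γ u'))
    rw [dist_comm _ x] at t3
    linarith
  refine ⟨hint, ?_, hstep⟩
  have h1 : glerp 1 Γ Γ'' = Γ'' := by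
    funext v; show (1 - 1 : ℝ) • Γ v + (1:ℝ) • Γ'' v = Γ'' v; simp
  have := hstep 1 (by norm_num)
  rwa [h1] at this
end
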